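/- Under the hypotheses of the bugs model without external input (ṗ_i = (p_{i+1}−p_i)/d_i, all d_i > 0), the sum of distances strictly decreases at a uniform rate: ∑_{i=1}^n ḋ_i ≤ −1/(2n). -/

import Mathlib

open Fin.NatCast

/-- In the bugs model without input, the sum of the distance derivatives satisfies
`∑ ḋ_i ≤ −1/(2n)`, where `ḋ_i = ⟨ṗ_i, ṗ_{i+1} − ṗ_i⟩`. -/
theorem bugs_sum_distance_derivative_bound (n : ℕ) [NeZero n]
    (p pdot : Fin n → EuclideanSpace ℝ (Fin 2))
    (d : Fin n → ℝ) (hd : ∀ i, d i = ‖p (i + 1) - p i‖)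
    (hdpos : ∀ i, 0 < d i)
    (hpdot : ∀ i, pdot i = (d i)⁻¹ • (p (i + 1) - p i)) :
    ∑ i : Fin n, (inner ℝ (pdot i) (pdot (i + 1) - pdot i) : ℝ) ≤ -1 / (2 * n) := by
  set u := pdot with hu
  -- unit norms
  have hnorm : ∀ i, ‖u i‖ = 1 := by
    intro i
    rw [hpdot i, norm_smul, norm_inv, Real.norm_eq_abs,
      abs_of_pos (hdpos i), ← hd i, inv_mul_cancel₀ (hdpos i).ne']
  set a : Fin n → ℝ := fun i => ‖u (i + 1) - u i‖ with ha
  have hterm : ∀ i : Fin n, (inner ℝ (u i) (u (i + 1) - u i) : ℝ) = -(a i ^ 2) / 2 := by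
    intro i
    have h1 := @norm_sub_sq_real (EuclideanSpace ℝ (Fin 2)) _ _ (u (i+1)) (u i)
    rw [hnorm, hnorm, real_inner_comm] at h1
    have h2 : (inner ℝ (u i) (u (i+1) - u i) : ℝ)
        = (inner ℝ (u i) (u (i+1)) : ℝ) - ‖u i‖^2 := by
      rw [inner_sub_right, real_inner_self_eq_norm_sq]
    rw [h2, hnorm]
    have h3 : a i = ‖u (i+1) - u i‖ := rfl
    rw [h3]
    linarith
  -- sum of edge vectors is zero
  have hsum0 : ∑ i : Fin n, (d i • u i) = 0 := by
    have : ∀ i : Fin n, d i • u i = p (i + 1) - p i := by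
      intro i
      rw [hpdot i, smul_inv_smul₀ (hdpos i).ne']
    simp only [this, Finset.sum_sub_distrib]
    have he : ∑ x : Fin n, p (x + 1) = ∑ x : Fin n, p x :=
      Fintype.sum_equiv (Equiv.addRight (1 : Fin n)) _ _ (fun i => rfl)
    rw [he, sub_self]
  -- there is j with inner (u 0) (u j) < 0
  obtain ⟨j, hj⟩ : ∃ j : Fin n, (inner ℝ (u 0) (u j) : ℝ) < 0 := by
    by_contra h
    push_neg at h
    have h0 : (0:ℝ) = ∑ i : Fin n, d i * (inner ℝ (u 0) (u i) : ℝ) := by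
      have h4 : (inner ℝ (u 0) (∑ i : Fin n, d i • u i) : ℝ) = 0 := by
        rw [hsum0, inner_zero_right]
      rw [inner_sum] at h4
      simp only [real_inner_smul_right] at h4
      exact h4.symm
    have hle : d 0 * (inner ℝ (u 0) (u 0) : ℝ) ≤ ∑ i : Fin n, d i * (inner ℝ (u 0) (u i) : ℝ) :=
      Finset.single_le_sum (fun i _ => mul_nonneg (hdpos i).le (h i)) (Finset.mem_univ 0)
    rw [real_inner_self_eq_norm_sq, hnorm 0] at hle
    have := hdpos 0
    nlinarith
  -- ‖u j - u 0‖ ≥ 1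
  have hdist : (1:ℝ) ≤ ‖u j - u 0‖ := by
    have h1 : ‖u j - u 0‖^2 = ‖u j‖^2 - 2 * (inner ℝ (u j) (u 0) : ℝ) + ‖u 0‖^2 :=
      @norm_sub_sq_real (EuclideanSpace ℝ (Fin 2)) _ _ (u j) (u 0)
    rw [hnorm j, hnorm 0, real_inner_comm] at h1
    nlinarith [norm_nonneg (u j - u 0)]
  -- telescoping: ∑ a ≥ ‖u j - u 0‖
  have htel : ∀ m : ℕ, ‖u (↑m : Fin n) - u 0‖ ≤ ∑ k ∈ Finset.range m, a (↑k : Fin n) := by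
    intro m
    induction m with
    | zero => simp [Nat.cast_zero]
    | succ m ih =>
      rw [Finset.sum_range_succ]
      calc ‖u (↑(m+1) : Fin n) - u 0‖
          ≤ ‖u (↑(m+1) : Fin n) - u (↑m : Fin n)‖ + ‖u (↑m : Fin n) - u 0‖ :=
            norm_sub_le_norm_sub_add_norm_sub _ _ _
        _ = a (↑m : Fin n) + ‖u (↑m : Fin n) - u 0‖ := by
            have h5 : ((m+1 : ℕ) : Fin n) = (↑m : Fin n) + 1 := by push_cast; ring
            rw [h5]
        _ ≤ a (↑m : Fin n) + ∑ k ∈ Finset.range m, a (↑k : Fin n) :=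
            add_le_add (le_refl _) ih
        _ = ∑ k ∈ Finset.range m, a (↑k : Fin n) + a (↑m : Fin n) := add_comm _ _
  have hsuma : (1:ℝ) ≤ ∑ i : Fin n, a i := by
    have h1 := htel j.val
    rw [Fin.cast_val_eq_self] at h1
    have h2 : ∑ k ∈ Finset.range j.val, a (↑k : Fin n) ≤ ∑ i : Fin n, a i := by
      calc ∑ k ∈ Finset.range j.val, a (↑k : Fin n)
          ≤ ∑ k ∈ Finset.range n, a (↑k : Fin n) :=
            Finset.sum_le_sum_of_subset_of_nonneg (Finset.range_subset_range.2 j.isLt.le)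
              (fun _ _ _ => norm_nonneg _)
        _ = ∑ i : Fin n, a i := by
            rw [← Fin.sum_univ_eq_sum_range (fun k => a (↑(k:ℕ) : Fin n)) n]
            simp [Fin.cast_val_eq_self]
    linarith
  -- Cauchy-Schwarz
  have hcs : (∑ i : Fin n, a i)^2 ≤ n * ∑ i : Fin n, a i ^ 2 := by
    simpa using sq_sum_le_card_mul_sum_sq (s := Finset.univ) (f := a)
  have hn : (0:ℝ) < n := by
    exact_mod_cast Nat.pos_of_ne_zero (NeZero.ne n)
  have hsq : (1:ℝ) ≤ n * ∑ i : Fin n, a i ^ 2 := by nlinarith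
  calc ∑ i : Fin n, (inner ℝ (pdot i) (pdot (i + 1) - pdot i) : ℝ)
      = ∑ i : Fin n, (-(a i ^ 2) / 2) := by
        exact Finset.sum_congr rfl fun i _ => hterm i
    _ = -(∑ i : Fin n, a i ^ 2) / 2 := by
        rw [← Finset.sum_div, ← Finset.sum_neg_distrib]
    _ ≤ -1 / (2 * n) := by
        rw [div_le_div_iff₀ (by norm_num) (by positivity)]
        nlinarith
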